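/- For a complex parameter α and nonnegative integers j, k, and x a real variable, the operator identity ((−α + E)∂_x)^j (e^{−x} x^k) = Σ_{l=0}^{∞} Σ_{i=0}^{j} C(j,i) (−1)^{j−i} (−α + l + 2k − i)_{j−i} ((−x)^l / l!) · ((−α + E)∂_x)^i x^k holds, where E = x∂_x is the Euler operator, C(j,i) is the binomial coefficient, and (a)_m is the rising Pochhammer symbol. -/

import Mathlib

/-- Rising Pochhammer symbol `(a)_n = a(a+1)⋯(a+n-1)`. -/
noncomputable def poch (a : ℂ) (n : ℕ) : ℂ := ∏ j ∈ Finset.range n, (a + j)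

/-- The operator `(-α + E)∂ₓ` where `E = x∂ₓ` is the Euler operator:
first differentiate, then apply `-α + E`. -/
noncomputable def T (α : ℂ) (f : ℝ → ℂ) : ℝ → ℂ :=
  fun x => (-α) * deriv f x + (x : ℂ) * deriv (deriv f) x

open Polynomial Finset

lemma poch_zero (a : ℂ) : poch a 0 = 1 := by simp [poch]
lemma poch_succ (a : ℂ) (n : ℕ) : poch a (n+1) = poch a n * (a + n) := by
  simp [poch, Finset.prod_range_succ]
lemma poch_succ' (a : ℂ) (n : ℕ) : poch a (n+1) = a * poch (a+1) n := by
  rw [poch, Finset.prod_range_succ', poch]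
  rw [mul_comm]
  congr 1
  · simp
  · apply Finset.prod_congr rfl
    intro s _
    push_cast; ring
lemma poch_top (a : ℂ) (m s : ℕ) (h : s ≤ m) :
    poch (a + s) (m - s) * (a + m) = poch (a + s) (m + 1 - s) := by
  have h1 : m + 1 - s = (m - s) + 1 := by omega
  rw [h1, poch_succ]
  congr 1
  rw [Nat.cast_sub h]
  ring

noncomputable def SP (a : ℂ) (m : ℕ) : Polynomial ℂ :=
  ∑ s ∈ Finset.range (m+1), C ((m.choose s : ℂ) * poch (a + s) (m - s) * (-1)^s) * X^s

lemma SP_coeff (a : ℂ) (m n : ℕ) :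
    (SP a m).coeff n = (m.choose n : ℂ) * poch (a + n) (m - n) * (-1)^n := by
  rw [SP, finset_sum_coeff]
  have h : ∀ s ∈ Finset.range (m+1),
      (C ((m.choose s : ℂ) * poch (a + s) (m - s) * (-1)^s) * X^s).coeff n
        = if s = n then (m.choose s : ℂ) * poch (a + s) (m - s) * (-1)^s else 0 := by
    intro s _
    rw [coeff_C_mul, coeff_X_pow]
    by_cases h : s = n
    · simp [h]
    · rw [if_neg h, if_neg (fun hh : n = s => h hh.symm)]
      simp
  rw [Finset.sum_congr rfl h, Finset.sum_ite_eq' (Finset.range (m+1)) n]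
  by_cases hn : n ∈ Finset.range (m+1)
  · simp [hn]
  · have hmn : m.choose n = 0 := Nat.choose_eq_zero_of_lt (by simp at hn; omega)
    simp [hn, hmn]

/-- key scalar identity: the bracket in P1/P3. -/
lemma poch_diff (a : ℂ) (m n : ℕ) (h : n < m) :
    poch (a + n) (m - n) - poch (a + 1 + n) (m - n)
      = ((n : ℂ) - m) * poch (a + n + 1) (m - n - 1) := by
  set d := m - n - 1 with hd
  have h1 : m - n = d + 1 := by omega
  rw [h1, poch_succ', poch_succ]
  have e1 : a + 1 + n = a + n + 1 := by ring
  rw [e1]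
  have e2 : (d : ℂ) = (m : ℂ) - n - 1 := by
    rw [hd, Nat.cast_sub (by omega), Nat.cast_sub (by omega)]
    push_cast; ring
  rw [e2]
  ring

lemma SP_P1 (a : ℂ) (m : ℕ) :
    derivative (SP a m) = SP a m - SP (a+1) m := by
  ext n
  rw [coeff_derivative, coeff_sub, SP_coeff, SP_coeff, SP_coeff]
  rcases lt_trichotomy n m with h | h | h
  · have key := poch_diff a m n h
    have h2 : m - (n+1) = m - n - 1 := by omega
    rw [h2]
    have e3 : a + (↑(n+1) : ℂ) = a + n + 1 := by push_cast; ring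
    rw [e3]
    have hch : ((m.choose (n+1) : ℂ)) * ((n:ℂ)+1) = (m.choose n : ℂ) * ((m:ℂ) - n) := by
      have hc : ((m.choose (n+1) * (n+1) : ℕ) : ℂ) = ((m.choose n * (m - n) : ℕ) : ℂ) := by
        exact congrArg (fun t : ℕ => (t : ℂ)) (Nat.choose_succ_right_eq m n)
      push_cast [Nat.cast_sub h.le] at hc
      exact_mod_cast hc
    push_cast
    linear_combination (-(m.choose n : ℂ) * (-1)^n) * key
      + (poch (a + (n:ℂ) + 1) (m - n - 1) * (-1)^(n+1)) * hch
  · subst h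
    simp [Nat.choose_succ_self, Nat.sub_self, poch_zero]
  · have h1 : m.choose n = 0 := Nat.choose_eq_zero_of_lt h
    have h2 : m.choose (n+1) = 0 := Nat.choose_eq_zero_of_lt (by omega)
    simp [h1, h2]

lemma SP_P2 (a : ℂ) (m : ℕ) :
    SP a (m+1) = C (a + m) * SP a m - X * SP (a+1) m := by
  ext n
  rw [coeff_sub, coeff_C_mul, SP_coeff, SP_coeff]
  cases n with
  | zero =>
    simp only [mul_coeff_zero, coeff_X_zero, zero_mul, sub_zero]
    simp only [Nat.choose_zero_right, Nat.cast_one, Nat.sub_zero, pow_zero, mul_one, one_mul,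
      Nat.cast_zero, add_zero]
    rw [poch_succ]
    ring
  | succ n =>
    rw [coeff_X_mul, SP_coeff]
    rcases lt_trichotomy n m with h | h | h
    · have hp := poch_top a m (n+1) (by omega)
      have hp' : poch (a + (↑(n+1):ℂ)) (m - (n+1)) * (a + m) = poch (a + (↑(n+1):ℂ)) (m - (n+1) + 1) := by
        rw [hp]; congr 1; omega
      have e3 : a + 1 + (n:ℂ) = a + (↑(n+1):ℂ) := by push_cast; ring
      rw [e3]
      have h4 : m + 1 - (n+1) = m - (n+1) + 1 := by omega
      have h2 : m - n = m - (n+1) + 1 := by omega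
      rw [h4, h2]
      have hpas : ((m+1).choose (n+1) : ℂ) = (m.choose n : ℂ) + (m.choose (n+1) : ℂ) := by
        rw [Nat.choose_succ_succ]; push_cast; ring
      linear_combination (-((-1:ℂ))^(n+1) * (m.choose (n+1):ℂ)) * hp'
        + ((-1:ℂ)^(n+1) * poch (a + (↑(n+1):ℂ)) (m - (n+1) + 1)) * hpas
    · subst h
      simp [Nat.choose_succ_self, Nat.sub_self, poch_zero, Nat.choose_self]
      ring
    · have h1 : m.choose n = 0 := Nat.choose_eq_zero_of_lt h
      have h2 : m.choose (n+1) = 0 := Nat.choose_eq_zero_of_lt (by omega)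
      have h3 : (m+1).choose (n+1) = 0 := Nat.choose_eq_zero_of_lt (by omega)
      simp [h1, h2, h3]

lemma SP_P3 (a : ℂ) (m : ℕ) :
    SP a m = SP (a+1) m - C (m : ℂ) * SP (a+1) (m-1) := by
  cases m with
  | zero => simp [SP, poch_zero]
  | succ m =>
    ext n
    rw [coeff_sub, coeff_C_mul, SP_coeff, SP_coeff, Nat.add_sub_cancel, SP_coeff]
    rcases lt_trichotomy n (m+1) with h | h | h
    · have key := poch_diff a (m+1) n h
      have h5 : m + 1 - n - 1 = m - n := by omega
      rw [h5] at key
      have e1 : a + 1 + (n:ℂ) = a + (n:ℂ) + 1 := by ring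
      rw [e1] at key ⊢
      push_cast at key
      have hch : ((m+1 : ℕ) : ℂ) * ((m.choose n : ℂ)) = ((m+1).choose n : ℂ) * ((↑(m+1):ℂ) - n) := by
        have hnat : (m+1) * m.choose n = (m+1).choose n * (m + 1 - n) := by
          rw [Nat.add_one_mul_choose_eq, Nat.choose_succ_right_eq]
        have hc : (((m+1) * m.choose n : ℕ) : ℂ) = (((m+1).choose n * (m + 1 - n) : ℕ) : ℂ) :=
          congrArg (fun t : ℕ => (t : ℂ)) hnat
        push_cast [Nat.cast_sub h.le] at hc ⊢
        linear_combination hc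
      push_cast at hch ⊢
      linear_combination (((m+1).choose n : ℂ) * (-1:ℂ)^n) * key
        + ((-1:ℂ)^n * poch (a + (n:ℂ) + 1) (m - n)) * hch
    · subst h
      have h1 : m.choose (m+1) = 0 := Nat.choose_eq_zero_of_lt (by omega)
      simp [h1, Nat.sub_self, poch_zero]
    · have h1 : m.choose n = 0 := Nat.choose_eq_zero_of_lt (by omega)
      have h2 : (m+1).choose n = 0 := Nat.choose_eq_zero_of_lt (by omega)
      simp [h1, h2]

noncomputable def Tp (α : ℂ) (p : Polynomial ℂ) : Polynomial ℂ :=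
  -(C α) * derivative p + X * derivative (derivative p)

noncomputable def Wp (α : ℂ) (p : Polynomial ℂ) : Polynomial ℂ :=
  -(C α) * (derivative p - p) + X * (derivative (derivative p) - 2 * derivative p + p)

lemma X_mul_derivative_X_pow (n : ℕ) :
    X * derivative (X^n : Polynomial ℂ) = C (n:ℂ) * X^n := by
  rw [derivative_X_pow]
  cases n with
  | zero => simp
  | succ n =>
    rw [Nat.add_sub_cancel]
    push_cast
    ring

lemma lemE (α a : ℂ) (m n : ℕ) :
    Wp α (X^n * SP a m) = SP a m * Tp α (X^n)
      + (C (α - 2*(n:ℂ) + a + (m:ℂ) + 1) * SP (a+1) m - SP (a+1) (m+1)) * X^n := by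
  have h0 : derivative (SP a m) = SP a m - SP (a+1) m := SP_P1 a m
  have h1 : derivative (SP (a+1) m) = SP (a+1) m - SP (a+1+1) m := SP_P1 (a+1) m
  have h2 : SP (a+1) (m+1) = C (a+1+m) * SP (a+1) m - X * SP (a+1+1) m := SP_P2 (a+1) m
  have hx := X_mul_derivative_X_pow n
  have hd1 : derivative (X^n * SP a m)
      = derivative (X^n : Polynomial ℂ) * SP a m + X^n * (SP a m - SP (a+1) m) := by
    rw [derivative_mul, h0]
  have hd2 : derivative (derivative (X^n * SP a m))
      = derivative (derivative (X^n : Polynomial ℂ)) * SP a m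
        + 2 * derivative (X^n : Polynomial ℂ) * (SP a m - SP (a+1) m)
        + X^n * (SP a m - 2 * SP (a+1) m + SP (a+1+1) m) := by
    rw [hd1, derivative_add, derivative_mul, derivative_mul, derivative_sub, h0, h1]
    ring
  rw [Wp, Tp, hd2, hd1, h2]
  simp only [map_add, map_sub, map_mul, map_one, map_ofNat]
  linear_combination (-2 * SP (a+1) m) * hx

noncomputable def cfn (α : ℂ) (k : ℕ) : ℕ → ℂ
  | 0 => 1
  | (i+1) => ((k - i : ℕ) : ℂ) * (((k - i : ℕ) : ℂ) - 1 - α) * cfn α k i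

lemma cfn_eq_zero (α : ℂ) (k : ℕ) : ∀ i, k < i → cfn α k i = 0 := by
  intro i
  induction i with
  | zero => omega
  | succ i ih =>
    intro h
    rcases Nat.lt_or_ge k i with h' | h'
    · rw [cfn, ih h', mul_zero]
    · have hki : k - i = 0 := by omega
      rw [cfn, hki]
      simp

lemma TpXpow (α : ℂ) (n : ℕ) :
    Tp α (X^n : Polynomial ℂ) = C ((n:ℂ) * ((n:ℂ) - 1 - α)) * X^(n-1) := by
  match n with
  | 0 => simp [Tp]
  | 1 =>
    simp only [Tp, pow_one, derivative_X, derivative_one, mul_zero, mul_one, Nat.sub_self, pow_zero]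
    simp only [map_add, map_sub, map_mul, map_one, Nat.cast_one]
    ring
  | (n+2) =>
    rw [Tp, derivative_X_pow, derivative_C_mul, derivative_X_pow]
    have e1 : n + 2 - 1 = n + 1 := by omega
    have e2 : n + 1 - 1 = n := by omega
    rw [e1, e2]
    push_cast
    simp only [map_add, map_sub, map_mul, map_one, map_ofNat]
    ring

lemma Wp_add (α : ℂ) (p q : Polynomial ℂ) : Wp α (p + q) = Wp α p + Wp α q := by
  simp only [Wp, derivative_add]; ring

lemma Wp_Cmul (α c : ℂ) (p : Polynomial ℂ) : Wp α (C c * p) = C c * Wp α p := by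
  simp only [Wp, derivative_C_mul]; ring

lemma Wp_sum {ι : Type*} (α : ℂ) (s : Finset ι) (f : ι → Polynomial ℂ) :
    Wp α (∑ i ∈ s, f i) = ∑ i ∈ s, Wp α (f i) := by
  classical
  induction s using Finset.induction with
  | empty => simp [Wp]
  | insert a s h ih => rw [Finset.sum_insert h, Finset.sum_insert h, Wp_add, ih]

noncomputable def aa (α : ℂ) (k : ℕ) (i : ℕ) : ℂ := -α + 2*(k:ℂ) - (i:ℂ)

noncomputable def RP (α : ℂ) (k j : ℕ) : Polynomial ℂ :=
  ∑ i ∈ Finset.range (j+1),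
    C ((j.choose i : ℂ) * (-1)^(j-i) * cfn α k i) * (X^(k-i) * SP (aa α k i) (j-i))

noncomputable def G1 (α : ℂ) (k j i : ℕ) : Polynomial ℂ :=
  C ((j.choose i : ℂ) * (-1)^(j-i) * cfn α k (i+1)) * (X^(k-(i+1)) * SP (aa α k i) (j-i))

noncomputable def G2 (α : ℂ) (k j i : ℕ) : Polynomial ℂ :=
  C ((j.choose i : ℂ) * (-1)^(j-i) * ((j:ℂ)+1) * cfn α k i) * (X^(k-i) * SP (aa α k i + 1) (j-i))

noncomputable def G3 (α : ℂ) (k j i : ℕ) : Polynomial ℂ :=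
  C ((j.choose i : ℂ) * (-1)^(j+1-i) * cfn α k i) * (X^(k-i) * SP (aa α k i + 1) (j+1-i))

lemma aa_succ (α : ℂ) (k i : ℕ) : aa α k (i+1) + 1 = aa α k i := by
  simp only [aa]; push_cast; ring

lemma lemG_lhs (α : ℂ) (k j : ℕ) :
    Wp α (RP α k j)
      = ∑ i ∈ Finset.range (j+1), (G1 α k j i + (G2 α k j i + G3 α k j i)) := by
  rw [RP, Wp_sum]
  apply Finset.sum_congr rfl
  intro i hi
  have hij : i ≤ j := by simp only [Finset.mem_range] at hi; omega
  rw [Wp_Cmul, lemE α (aa α k i) (j-i) (k-i), TpXpow]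
  have hx1 : k - i - 1 = k - (i+1) := by omega
  have hx2 : j - i + 1 = j + 1 - i := by omega
  rw [hx1, hx2, G1, G2, G3]
  have h1' : C ((j.choose i : ℂ) * (-1)^(j-i) * cfn α k i)
        * C (((k-i : ℕ):ℂ) * (((k-i : ℕ):ℂ) - 1 - α))
      = C ((j.choose i : ℂ) * (-1)^(j-i) * cfn α k (i+1)) := by
    rw [← C_mul]
    congr 1
    rw [cfn]
    ring
  have h3 : C ((j.choose i : ℂ) * (-1)^(j-i) * cfn α k i)
        * C (α - 2*((k-i : ℕ):ℂ) + aa α k i + ((j-i : ℕ):ℂ) + 1)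
      = C ((j.choose i : ℂ) * (-1)^(j-i) * ((j:ℂ)+1) * cfn α k i) := by
    rw [← C_mul]
    congr 1
    rcases le_or_gt i k with hik | hik
    · rw [Nat.cast_sub hik, Nat.cast_sub hij]
      simp only [aa]
      ring
    · rw [cfn_eq_zero α k i hik]
      ring
  have h4 : C ((j.choose i : ℂ) * (-1)^(j+1-i) * cfn α k i)
      = - C ((j.choose i : ℂ) * (-1)^(j-i) * cfn α k i) := by
    rw [← map_neg]
    congr 1
    have e : j + 1 - i = (j - i) + 1 := by omega
    rw [e, pow_succ]
    ring
  linear_combination (SP (aa α k i) (j-i) * X^(k-(i+1))) * h1'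
    + (SP (aa α k i + 1) (j-i) * X^(k-i)) * h3
    + (-(SP (aa α k i + 1) (j+1-i) * X^(k-i))) * h4

noncomputable def H1 (α : ℂ) (k j i : ℕ) : Polynomial ℂ :=
  C (((j+1).choose i : ℂ) * (-1)^(j+1-i) * cfn α k i) * (X^(k-i) * SP (aa α k i + 1) (j+1-i))

noncomputable def H2 (α : ℂ) (k j i : ℕ) : Polynomial ℂ :=
  C (((j+1).choose i : ℂ) * (-1)^(j+1-i) * cfn α k i * ((j+1-i : ℕ):ℂ))
    * (X^(k-i) * SP (aa α k i + 1) (j-i))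

lemma lemG_rhs_step1 (α : ℂ) (k j : ℕ) :
    RP α k (j+1) = (∑ i ∈ Finset.range (j+2), H1 α k j i)
      - ∑ i ∈ Finset.range (j+2), H2 α k j i := by
  rw [RP, ← Finset.sum_sub_distrib]
  apply Finset.sum_congr rfl
  intro i hi
  rw [SP_P3 (aa α k i) (j+1-i), (show j + 1 - i - 1 = j - i by omega), H1, H2]
  simp only [map_mul]
  ring

lemma H2_sum (α : ℂ) (k j : ℕ) :
    ∑ i ∈ Finset.range (j+2), H2 α k j i = - ∑ i ∈ Finset.range (j+1), G2 α k j i := by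
  rw [Finset.sum_range_succ]
  have hlast : H2 α k j (j+1) = 0 := by
    rw [H2, Nat.sub_self]
    simp
  rw [hlast, add_zero, ← Finset.sum_neg_distrib]
  apply Finset.sum_congr rfl
  intro i hi
  have hij : i ≤ j := by simp only [Finset.mem_range] at hi; omega
  rw [H2, G2, ← neg_mul, ← map_neg]
  congr 2
  have hnat : (j+1).choose i * (j+1-i) = (j+1) * (j.choose i) := by
    have h1 := Nat.choose_succ_right_eq (j+1) i
    have h2 := Nat.add_one_mul_choose_eq j i
    omega
  have hcast : ((j+1).choose i : ℂ) * ((j+1-i : ℕ):ℂ) = ((j:ℂ)+1) * (j.choose i : ℂ) := by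
    have := congrArg (fun t : ℕ => (t : ℂ)) hnat
    push_cast at this
    exact_mod_cast this
  have e : j + 1 - i = (j - i) + 1 := by omega
  rw [e] at hcast ⊢
  rw [pow_succ]
  push_cast at hcast ⊢
  linear_combination (cfn α k i * (-1)^(j-i) * (-1)) * hcast

lemma H1_succ (α : ℂ) (k j i : ℕ) (hij : i ≤ j) :
    H1 α k j (i+1) = G1 α k j i + G3 α k j (i+1) := by
  rw [H1, G1, G3]
  have e1 : j + 1 - (i+1) = j - i := by omega
  rw [e1, aa_succ]
  have e2 : ((j+1).choose (i+1) : ℂ) = (j.choose i : ℂ) + (j.choose (i+1) : ℂ) := by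
    rw [Nat.choose_succ_succ]
    push_cast
    ring
  rw [e2]
  simp only [map_add, map_mul]
  ring

lemma H1_sum (α : ℂ) (k j : ℕ) :
    ∑ i ∈ Finset.range (j+2), H1 α k j i
      = (∑ i ∈ Finset.range (j+1), G1 α k j i) + ∑ i ∈ Finset.range (j+1), G3 α k j i := by
  rw [Finset.sum_range_succ']
  have h1 : ∀ i ∈ Finset.range (j+1), H1 α k j (i+1) = G1 α k j i + G3 α k j (i+1) := by
    intro i hi
    exact H1_succ α k j i (by simp only [Finset.mem_range] at hi; omega)
  rw [Finset.sum_congr rfl h1, Finset.sum_add_distrib]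
  have h0 : H1 α k j 0 = G3 α k j 0 := by
    rw [H1, G3]
    simp
  rw [h0, add_assoc]
  congr 1
  have h3 : G3 α k j (j+1) = 0 := by
    rw [G3, Nat.choose_succ_self]
    simp
  calc (∑ i ∈ Finset.range (j+1), G3 α k j (i+1)) + G3 α k j 0
      = ∑ i ∈ Finset.range (j+2), G3 α k j i := (Finset.sum_range_succ' _ _).symm
    _ = (∑ i ∈ Finset.range (j+1), G3 α k j i) + G3 α k j (j+1) := Finset.sum_range_succ _ _
    _ = ∑ i ∈ Finset.range (j+1), G3 α k j i := by rw [h3, add_zero]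

lemma lemG (α : ℂ) (k j : ℕ) : Wp α (RP α k j) = RP α k (j+1) := by
  rw [lemG_lhs, lemG_rhs_step1, H2_sum, H1_sum]
  simp only [Finset.sum_add_distrib]
  ring

-- ===== Analytic part =====

lemma hasDerivAt_expPoly (P : Polynomial ℂ) (x : ℝ) :
    HasDerivAt (fun t : ℝ => Complex.exp (-t) * P.eval (t:ℂ))
      (Complex.exp (-(x:ℂ)) * (derivative P - P).eval (x:ℂ)) x := by
  have h1 : HasDerivAt (fun z : ℂ => Complex.exp (-z)) (-Complex.exp (-(x:ℂ))) (x:ℂ) := by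
    simpa [Function.comp_def] using (Complex.hasDerivAt_exp (-(x:ℂ))).comp (x:ℂ) (hasDerivAt_neg (x:ℂ))
  have h1' : HasDerivAt (fun t : ℝ => Complex.exp (-(t:ℂ))) (-Complex.exp (-(x:ℂ))) x :=
    h1.comp_ofReal
  have h2 : HasDerivAt (fun t : ℝ => P.eval (t:ℂ)) ((derivative P).eval (x:ℂ)) x :=
    (P.hasDerivAt (x:ℂ)).comp_ofReal
  have h3 := h1'.mul h2
  have : -Complex.exp (-(x:ℂ)) * P.eval (x:ℂ) + Complex.exp (-(x:ℂ)) * (derivative P).eval (x:ℂ)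
      = Complex.exp (-(x:ℂ)) * (derivative P - P).eval (x:ℂ) := by
    rw [eval_sub]; ring
  rw [this] at h3
  exact h3

lemma deriv_expPoly (P : Polynomial ℂ) :
    deriv (fun t : ℝ => Complex.exp (-t) * P.eval (t:ℂ))
      = fun x : ℝ => Complex.exp (-(x:ℂ)) * (derivative P - P).eval (x:ℂ) := by
  funext x
  exact (hasDerivAt_expPoly P x).deriv

lemma T_expPoly (α : ℂ) (P : Polynomial ℂ) :
    T α (fun t : ℝ => Complex.exp (-t) * P.eval (t:ℂ))
      = fun x : ℝ => Complex.exp (-(x:ℂ)) * (Wp α P).eval (x:ℂ) := by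
  funext x
  simp only [T]
  rw [deriv_expPoly, deriv_expPoly]
  simp only [Wp, eval_add, eval_sub, eval_mul, eval_neg, eval_C, eval_X, eval_ofNat,
    derivative_sub]
  ring

lemma T_polyEval (α : ℂ) (P : Polynomial ℂ) :
    T α (fun t : ℝ => P.eval (t:ℂ)) = fun x : ℝ => (Tp α P).eval (x:ℂ) := by
  have hd : ∀ (Q : Polynomial ℂ), deriv (fun t : ℝ => Q.eval (t:ℂ))
      = fun x : ℝ => (derivative Q).eval (x:ℂ) := by
    intro Q
    funext x
    exact ((Q.hasDerivAt (x:ℂ)).comp_ofReal).deriv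
  funext x
  simp only [T]
  rw [hd, hd]
  simp only [Tp, eval_add, eval_mul, eval_neg, eval_C, eval_X]

lemma Tp_Cmul (α c : ℂ) (p : Polynomial ℂ) : Tp α (C c * p) = C c * Tp α p := by
  simp only [Tp, derivative_C_mul]; ring

lemma lemB (α : ℂ) (k : ℕ) :
    ∀ i : ℕ, (T α)^[i] (fun t : ℝ => (t : ℂ) ^ k)
      = fun x : ℝ => cfn α k i * (x:ℂ)^(k-i) := by
  intro i
  induction i with
  | zero => simp [cfn]
  | succ i ih =>
    rw [Function.iterate_succ_apply', ih]
    have he : (fun x : ℝ => cfn α k i * (x:ℂ)^(k-i))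
        = fun t : ℝ => (C (cfn α k i) * X^(k-i) : Polynomial ℂ).eval (t:ℂ) := by
      funext t
      simp
    rw [he, T_polyEval, Tp_Cmul, TpXpow]
    funext x
    simp only [eval_mul, eval_C, eval_pow, eval_X]
    rw [(show k - i - 1 = k - (i+1) by omega), cfn]
    ring

lemma summable_poch (z : ℂ) : ∀ (m : ℕ) (a : ℂ),
    Summable (fun l : ℕ => poch (a + l) m * z^l / (l.factorial : ℂ)) := by
  intro m
  induction m with
  | zero =>
    intro a
    simpa [poch_zero] using (NormedSpace.expSeries_div_summable z)
  | succ m ih =>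
    intro a
    have hg := ih a
    have hg1 := ih (a+1)
    have hshift : ∀ n : ℕ, z * (poch (a + 1 + (n:ℂ)) m * z^n / (n.factorial : ℂ))
        = ((n+1:ℕ):ℂ) * (poch (a + ((n+1:ℕ):ℂ)) m * z^(n+1) / (((n+1:ℕ).factorial : ℕ) : ℂ)) := by
      intro n
      push_cast
      rw [(show a + ((n:ℂ)+1) = a + 1 + n by ring), Nat.factorial_succ]
      have hne : ((n:ℂ)+1) ≠ 0 := Nat.cast_add_one_ne_zero n
      have hfe : ((n.factorial : ℕ) : ℂ) ≠ 0 := by exact_mod_cast Nat.factorial_ne_zero n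
      push_cast
      field_simp
      ring
    have hv : Summable (fun l : ℕ => (l:ℂ) * (poch (a + l) m * z^l / (l.factorial : ℂ))) := by
      apply (summable_nat_add_iff 1).mp
      exact Summable.congr (hg1.mul_left z) (fun n => by exact_mod_cast hshift n)
    have hcg : ∀ l : ℕ, (a + m) * (poch (a + l) m * z^l / (l.factorial:ℂ))
          + (l:ℂ) * (poch (a + l) m * z^l / (l.factorial:ℂ))
        = poch (a + l) (m+1) * z^l / (l.factorial : ℂ) := by
      intro l
      rw [poch_succ]
      ring
    exact Summable.congr ((hg.mul_left _).add hv) hcg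

lemma tsum_poch (z : ℂ) : ∀ (m : ℕ) (a : ℂ),
    ∑' l : ℕ, poch (a + l) m * z^l / (l.factorial : ℂ)
      = Complex.exp z * (SP a m).eval (-z) := by
  intro m
  induction m with
  | zero =>
    intro a
    have h1 : (SP a 0).eval (-z) = 1 := by
      simp [SP, poch_zero]
    rw [h1, mul_one]
    rw [Complex.exp_eq_exp_ℂ, NormedSpace.exp_eq_tsum_div]
    exact tsum_congr (fun l => by rw [poch_zero]; ring)
  | succ m ih =>
    intro a
    have hg := summable_poch z m a
    have hg1 := summable_poch z m (a+1)
    have hv : Summable (fun l : ℕ => (l:ℂ) * (poch (a + l) m * z^l / (l.factorial : ℂ))) := by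
      apply (summable_nat_add_iff 1).mp
      refine Summable.congr (hg1.mul_left z) (fun n => ?_)
      push_cast
      rw [(show a + ((n:ℂ)+1) = a + 1 + n by ring), Nat.factorial_succ]
      have hne : ((n:ℂ)+1) ≠ 0 := Nat.cast_add_one_ne_zero n
      have hfe : ((n.factorial : ℕ) : ℂ) ≠ 0 := by exact_mod_cast Nat.factorial_ne_zero n
      push_cast
      field_simp
      ring
    calc ∑' l : ℕ, poch (a + l) (m+1) * z^l / (l.factorial : ℂ)
        = ∑' l : ℕ, ((a + m) * (poch (a + l) m * z^l / (l.factorial:ℂ))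
            + (l:ℂ) * (poch (a + l) m * z^l / (l.factorial:ℂ))) := by
          refine tsum_congr (fun l => ?_)
          rw [poch_succ]
          ring
      _ = (a + m) * (∑' l : ℕ, poch (a + l) m * z^l / (l.factorial:ℂ))
            + ∑' l : ℕ, (l:ℂ) * (poch (a + l) m * z^l / (l.factorial:ℂ)) := by
          rw [Summable.tsum_add (hg.mul_left _) hv, tsum_mul_left]
      _ = (a + m) * (Complex.exp z * (SP a m).eval (-z))
            + z * (Complex.exp z * (SP (a+1) m).eval (-z)) := by
          rw [ih a]
          congr 1
          rw [Summable.tsum_eq_zero_add hv]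
          simp only [Nat.cast_zero, zero_mul, zero_add]
          rw [← ih (a+1), ← tsum_mul_left]
          refine tsum_congr (fun n => ?_)
          push_cast
          rw [(show a + ((n:ℂ)+1) = a + 1 + n by ring), Nat.factorial_succ]
          have hne : ((n:ℂ)+1) ≠ 0 := Nat.cast_add_one_ne_zero n
          have hfe : ((n.factorial : ℕ) : ℂ) ≠ 0 := by exact_mod_cast Nat.factorial_ne_zero n
          push_cast
          field_simp
          ring
      _ = Complex.exp z * (SP a (m+1)).eval (-z) := by
          rw [SP_P2]
          simp only [eval_sub, eval_mul, eval_C, eval_X]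
          ring

lemma lemF (α : ℂ) (j k : ℕ) (x : ℝ) :
    (∑' l : ℕ, ∑ i ∈ Finset.range (j + 1),
        (j.choose i : ℂ) * (-1 : ℂ) ^ (j - i)
          * poch (-α + l + 2 * k - i) (j - i)
          * ((-(x : ℂ)) ^ l / (Nat.factorial l : ℂ))
          * ((T α)^[i] (fun t : ℝ => (t : ℂ) ^ k) x))
      = Complex.exp (-(x:ℂ)) * (RP α k j).eval (x:ℂ) := by
  have hsummand : ∀ i ∈ Finset.range (j+1), ∀ l : ℕ,
      (j.choose i : ℂ) * (-1 : ℂ) ^ (j - i) * poch (-α + l + 2 * k - i) (j - i)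
          * ((-(x : ℂ)) ^ l / (Nat.factorial l : ℂ)) * ((T α)^[i] (fun t : ℝ => (t : ℂ) ^ k) x)
        = ((j.choose i : ℂ) * (-1 : ℂ) ^ (j - i) * (cfn α k i * (x:ℂ)^(k-i)))
          * (poch (aa α k i + l) (j - i) * (-(x:ℂ))^l / (l.factorial : ℂ)) := by
    intro i hi l
    rw [lemB α k i]
    rw [(show -α + (l:ℂ) + 2 * (k:ℂ) - (i:ℂ) = aa α k i + l by rw [aa]; ring)]
    ring
  calc (∑' l : ℕ, ∑ i ∈ Finset.range (j + 1),
        (j.choose i : ℂ) * (-1 : ℂ) ^ (j - i)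
          * poch (-α + l + 2 * k - i) (j - i)
          * ((-(x : ℂ)) ^ l / (Nat.factorial l : ℂ))
          * ((T α)^[i] (fun t : ℝ => (t : ℂ) ^ k) x))
      = ∑' l : ℕ, ∑ i ∈ Finset.range (j + 1),
          ((j.choose i : ℂ) * (-1 : ℂ) ^ (j - i) * (cfn α k i * (x:ℂ)^(k-i)))
            * (poch (aa α k i + l) (j - i) * (-(x:ℂ))^l / (l.factorial : ℂ)) :=
        tsum_congr (fun l => Finset.sum_congr rfl (fun i hi => hsummand i hi l))
    _ = ∑ i ∈ Finset.range (j + 1), ∑' l : ℕ,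
          ((j.choose i : ℂ) * (-1 : ℂ) ^ (j - i) * (cfn α k i * (x:ℂ)^(k-i)))
            * (poch (aa α k i + l) (j - i) * (-(x:ℂ))^l / (l.factorial : ℂ)) := by
        refine Summable.tsum_finsetSum (fun i hi => ?_)
        exact (summable_poch (-(x:ℂ)) (j-i) (aa α k i)).mul_left _
    _ = ∑ i ∈ Finset.range (j + 1),
          ((j.choose i : ℂ) * (-1 : ℂ) ^ (j - i) * (cfn α k i * (x:ℂ)^(k-i)))
            * (Complex.exp (-(x:ℂ)) * (SP (aa α k i) (j-i)).eval (x:ℂ)) := by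
        refine Finset.sum_congr rfl (fun i hi => ?_)
        rw [tsum_mul_left, tsum_poch]
        rw [neg_neg]
    _ = Complex.exp (-(x:ℂ)) * (RP α k j).eval (x:ℂ) := by
        rw [RP, eval_finset_sum, Finset.mul_sum]
        refine Finset.sum_congr rfl (fun i hi => ?_)
        simp only [eval_mul, eval_C, eval_pow, eval_X]
        ring

lemma main_iter (α : ℂ) (k : ℕ) : ∀ j : ℕ,
    (T α)^[j] (fun t : ℝ => Complex.exp (-t) * (t : ℂ) ^ k)
      = fun x : ℝ => Complex.exp (-(x:ℂ)) * (RP α k j).eval (x:ℂ) := by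
  intro j
  induction j with
  | zero =>
    funext x
    simp only [Function.iterate_zero, id_eq]
    have h0 : (RP α k 0).eval (x:ℂ) = (x:ℂ)^k := by
      rw [RP]
      simp [SP, poch_zero, cfn]
    rw [h0]
  | succ j ih =>
    rw [Function.iterate_succ_apply', ih]
    have he : (fun x : ℝ => Complex.exp (-(x:ℂ)) * (RP α k j).eval (x:ℂ))
        = (fun t : ℝ => Complex.exp (-t) * (RP α k j).eval (t:ℂ)) := rfl
    rw [he, T_expPoly, lemG]

/-- Operator identity:
`((-α+E)∂ₓ)^j (e^{-x} x^k) = Σ_{l≥0} Σ_{i=0}^{j} C(j,i) (-1)^{j-i} (-α+l+2k-i)_{j-i} ((-x)^l/l!) ((-α+E)∂ₓ)^i x^k`. -/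
theorem stmt8 (α : ℂ) (j k : ℕ) (x : ℝ) :
    (T α)^[j] (fun t : ℝ => Complex.exp (-t) * (t : ℂ) ^ k) x
      = ∑' l : ℕ, ∑ i ∈ Finset.range (j + 1),
          (j.choose i : ℂ) * (-1 : ℂ) ^ (j - i)
            * poch (-α + l + 2 * k - i) (j - i)
            * ((-(x : ℂ)) ^ l / (Nat.factorial l : ℂ))
            * ((T α)^[i] (fun t : ℝ => (t : ℂ) ^ k) x) := by
  rw [main_iter α k j]
  exact (lemF α j k x).symm
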